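/- Let R be an integral domain and let k₀₀, k₀₁, k₁₀, k₁₁ ∈ R satisfy 4 + k₀₁k₁₀k₁₁ − k₀₁² − k₁₀² − k₁₁² + k₀₀² = 0, and suppose k₀₁ ≠ ±2, k₁₀ ≠ ±2 and k₁₁ ≠ ±2. Then all eight of the following elements are nonzero: k₀₁+k₁₀+k₁₁+2+k₀₀, k₀₁+k₁₀+k₁₁+2−k₀₀, k₀₁+k₁₀−k₁₁−2+k₀₀, k₀₁+k₁₀−k₁₁−2−k₀₀, k₀₁−k₁₀+k₁₁−2+k₀₀, k₀₁−k₁₀+k₁₁−2−k₀₀, −k₀₁+k₁₀+k₁₁−2+k₀₀, −k₀₁+k₁₀+k₁₁−2−k₀₀. -/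
import Mathlib


/-- If `k₀₀, k₀₁, k₁₀, k₁₁` in an integral domain satisfy the cubic relationship
`4 + k₀₁k₁₀k₁₁ − k₀₁² − k₁₀² − k₁₁² + k₀₀² = 0` and `k₀₁, k₁₀, k₁₁ ≠ ±2`, then all
eight listed elements are nonzero. -/
theorem statement9 {R : Type*} [CommRing R] [IsDomain R] (k00 k01 k10 k11 : R)
    (hcubic : 4 + k01 * k10 * k11 - k01 ^ 2 - k10 ^ 2 - k11 ^ 2 + k00 ^ 2 = 0)
    (h01p : k01 ≠ 2) (h01m : k01 ≠ -2)
    (h10p : k10 ≠ 2) (h10m : k10 ≠ -2)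
    (h11p : k11 ≠ 2) (h11m : k11 ≠ -2) :
    k01 + k10 + k11 + 2 + k00 ≠ 0 ∧
    k01 + k10 + k11 + 2 - k00 ≠ 0 ∧
    k01 + k10 - k11 - 2 + k00 ≠ 0 ∧
    k01 + k10 - k11 - 2 - k00 ≠ 0 ∧
    k01 - k10 + k11 - 2 + k00 ≠ 0 ∧
    k01 - k10 + k11 - 2 - k00 ≠ 0 ∧
    -k01 + k10 + k11 - 2 + k00 ≠ 0 ∧
    -k01 + k10 + k11 - 2 - k00 ≠ 0 := by
  have hAp : k01 + 2 ≠ 0 := fun h => h01m (by linear_combination h)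
  have hAm : k01 - 2 ≠ 0 := fun h => h01p (by linear_combination h)
  have hBp : k10 + 2 ≠ 0 := fun h => h10m (by linear_combination h)
  have hBm : k10 - 2 ≠ 0 := fun h => h10p (by linear_combination h)
  have hCp : k11 + 2 ≠ 0 := fun h => h11m (by linear_combination h)
  have hCm : k11 - 2 ≠ 0 := fun h => h11p (by linear_combination h)
  refine ⟨fun h => ?_, fun h => ?_, fun h => ?_, fun h => ?_,
    fun h => ?_, fun h => ?_, fun h => ?_, fun h => ?_⟩
  · exact mul_ne_zero (mul_ne_zero hAp hBp) hCp (by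
      linear_combination hcubic - (k00 - (k01 + k10 + k11 + 2)) * h)
  · exact mul_ne_zero (mul_ne_zero hAp hBp) hCp (by
      linear_combination hcubic + (k00 + (k01 + k10 + k11 + 2)) * h)
  · exact mul_ne_zero (mul_ne_zero hAm hBm) hCp (by
      linear_combination hcubic - (k00 - (k01 + k10 - k11 - 2)) * h)
  · exact mul_ne_zero (mul_ne_zero hAm hBm) hCp (by
      linear_combination hcubic + (k00 + (k01 + k10 - k11 - 2)) * h)
  · exact mul_ne_zero (mul_ne_zero hAm hBp) hCm (by
      linear_combination hcubic - (k00 - (k01 - k10 + k11 - 2)) * h)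
  · exact mul_ne_zero (mul_ne_zero hAm hBp) hCm (by
      linear_combination hcubic + (k00 + (k01 - k10 + k11 - 2)) * h)
  · exact mul_ne_zero (mul_ne_zero hAp hBm) hCm (by
      linear_combination hcubic - (k00 - (-k01 + k10 + k11 - 2)) * h)
  · exact mul_ne_zero (mul_ne_zero hAp hBm) hCm (by
      linear_combination hcubic + (k00 + (-k01 + k10 + k11 - 2)) * h)
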